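/- Let m ≥ 1 be an integer, δ > 0 a real number, and K ⊆ ℝ^m a nonempty connected set. Define A := {a ∈ ℤ^m : (∏_{i=1}^m [δaᵢ, δ(aᵢ+1)]) ∩ K ≠ ∅}. Then A is connected under grid adjacency: for any a, b ∈ A there is a finite sequence a = a₀, a₁, …, a_k = b of elements of A such that for each j, a_j and a_{j+1} differ in exactly one coordinate, and there by exactly 1. -/
import Mathlib


/-- Two elements of `ℤ^m` are (grid) adjacent: they agree in all but one coordinate, where
they differ by exactly `1`. -/
def GridAdjZ {m : ℕ} (a b : Fin m → ℤ) : Prop :=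
  ∃ j : Fin m, (∀ i : Fin m, i ≠ j → a i = b i) ∧ (a j = b j + 1 ∨ b j = a j + 1)

/-- The closed grid cell of index `a ∈ ℤ^m` at scale `δ`:
`∏_{i=1}^m [δaᵢ, δ(aᵢ+1)] ⊆ ℝ^m` meets the set `K`. -/
def CellMeets {m : ℕ} (δ : ℝ) (K : Set (EuclideanSpace ℝ (Fin m))) (a : Fin m → ℤ) : Prop :=
  ∃ x ∈ K, ∀ i : Fin m, x i ∈ Set.Icc (δ * (a i : ℝ)) (δ * ((a i : ℝ) + 1))

/-- The closed grid cell of index `c` at scale `δ`. -/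
def GridCell {m : ℕ} (δ : ℝ) (c : Fin m → ℤ) : Set (EuclideanSpace ℝ (Fin m)) :=
  {x | ∀ i : Fin m, x i ∈ Set.Icc (δ * (c i : ℝ)) (δ * ((c i : ℝ) + 1))}

lemma isClosed_gridCell {m : ℕ} (δ : ℝ) (c : Fin m → ℤ) : IsClosed (GridCell δ c) := by
  have h : GridCell δ c = ⋂ i : Fin m,
      (EuclideanSpace.proj (𝕜 := ℝ) i) ⁻¹' Set.Icc (δ * (c i : ℝ)) (δ * ((c i : ℝ) + 1)) := by
    ext x
    simp only [GridCell, Set.mem_setOf_eq, Set.mem_iInter, Set.mem_preimage]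
    rfl
  rw [h]
  exact isClosed_iInter fun i =>
    IsClosed.preimage (EuclideanSpace.proj i).continuous isClosed_Icc

lemma dist_coord_le {m : ℕ} (x y : EuclideanSpace ℝ (Fin m)) (i : Fin m) :
    dist (x i) (y i) ≤ dist x y := by
  rw [EuclideanSpace.dist_eq]
  have h : dist (x i) (y i) = Real.sqrt (dist (x i) (y i) ^ 2) :=
    (Real.sqrt_sq dist_nonneg).symm
  rw [h]
  exact Real.sqrt_le_sqrt
    (Finset.single_le_sum (fun j _ => sq_nonneg (dist (x j) (y j))) (Finset.mem_univ i))

/-- The grid cells form a locally finite family. -/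
lemma gridCell_locallyFinite {m : ℕ} {δ : ℝ} (hδ : 0 < δ) :
    LocallyFinite (fun c : Fin m → ℤ => GridCell δ c) := by
  intro x
  refine ⟨Metric.ball x δ, Metric.ball_mem_nhds x hδ, ?_⟩
  refine Set.Finite.subset
    (Set.Finite.pi' (t := fun i => Set.Icc (⌈x i / δ⌉ - 2) (⌊x i / δ⌋ + 1))
      (fun i => Set.finite_Icc _ _)) ?_
  rintro c ⟨y, hyc, hyb⟩
  intro i
  have hyx : dist (y i) (x i) < δ := lt_of_le_of_lt (dist_coord_le y x i) (Metric.mem_ball.1 hyb)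
  have h1 : |y i - x i| < δ := by rwa [Real.dist_eq] at hyx
  have h2 : δ * (c i : ℝ) ≤ y i := (hyc i).1
  have h3 : y i ≤ δ * ((c i : ℝ) + 1) := (hyc i).2
  have hlo : x i - δ < y i := by cases abs_lt.1 h1 with
    | intro hl hr => linarith
  have hhi : y i < x i + δ := by cases abs_lt.1 h1 with
    | intro hl hr => linarith
  constructor
  · -- ⌈x i / δ⌉ - 2 ≤ c i
    have ht : x i / δ - 2 < (c i : ℝ) := by
      have : x i - δ < δ * ((c i : ℝ) + 1) := lt_of_lt_of_le hlo h3
      have hx : x i / δ < (c i : ℝ) + 2 := by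
        rw [div_lt_iff₀ hδ]; nlinarith
      linarith
    have hceil : (⌈x i / δ⌉ : ℝ) < x i / δ + 1 := Int.ceil_lt_add_one _
    have : ((⌈x i / δ⌉ - 2 : ℤ) : ℝ) < ((c i + 1 : ℤ) : ℝ) := by push_cast; linarith
    have := Int.cast_lt.1 this
    omega
  · -- c i ≤ ⌊x i / δ⌋ + 1
    have ht : (c i : ℝ) < x i / δ + 1 := by
      have h4 : δ * (c i : ℝ) < x i + δ := lt_of_le_of_lt h2 hhi
      have h5 : (c i : ℝ) < (x i + δ) / δ := by
        rw [lt_div_iff₀ hδ]; nlinarith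
      have h6 : (x i + δ) / δ = x i / δ + 1 := by
        field_simp
      linarith [h6 ▸ h5]
    have hfloor : x i / δ < (⌊x i / δ⌋ : ℝ) + 1 := Int.lt_floor_add_one _
    have : ((c i : ℤ) : ℝ) < ((⌊x i / δ⌋ + 2 : ℤ) : ℝ) := by push_cast; linarith
    have := Int.cast_lt.1 this
    omega

/-- Any two cells containing a common point of `K` are connected by a chain of
adjacent cells all containing that point. -/
lemma chain_of_common_point {m : ℕ} {δ : ℝ} (hδ : 0 < δ)
    {K : Set (EuclideanSpace ℝ (Fin m))} {x : EuclideanSpace ℝ (Fin m)} (hxK : x ∈ K)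
    (s : Finset (Fin m)) :
    ∀ u v : Fin m → ℤ, (∀ i ∉ s, u i = v i) → x ∈ GridCell δ u → x ∈ GridCell δ v →
      Relation.ReflTransGen
        (fun u v : Fin m → ℤ => CellMeets δ K u ∧ CellMeets δ K v ∧ GridAdjZ u v) u v := by
  classical
  induction s using Finset.induction with
  | empty =>
    intro u v h hu hv
    have : u = v := funext fun i => h i (Finset.notMem_empty i)
    rw [this]
  | @insert j s hj ih =>
    intro u v h hu hv
    by_cases hc : u j = v j
    · refine ih u v (fun i hi => ?_) hu hv
      by_cases hij : i = j
      · rw [hij]; exact hc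
      · exact h i (by simp [hij, hi])
    · set w := Function.update u j (v j) with hw
      have hwC : x ∈ GridCell δ w := by
        intro i
        by_cases hij : i = j
        · subst hij; simpa [hw] using hv i
        · simpa [hw, Function.update_of_ne hij] using hu i
      have hmu : CellMeets δ K u := ⟨x, hxK, hu⟩
      have hmw : CellMeets δ K w := ⟨x, hxK, hwC⟩
      have hadj : GridAdjZ u w := by
        refine ⟨j, fun i hij => by simp [hw, Function.update_of_ne hij], ?_⟩
        have hwj : w j = v j := by simp [hw]
        -- from interval overlaps, |u j - v j| ≤ 1
        have h1 : δ * (u j : ℝ) ≤ δ * ((v j : ℝ) + 1) := le_trans (hu j).1 (hv j).2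
        have h2 : δ * (v j : ℝ) ≤ δ * ((u j : ℝ) + 1) := le_trans (hv j).1 (hu j).2
        have h1' : (u j : ℝ) ≤ (v j : ℝ) + 1 := le_of_mul_le_mul_left h1 hδ
        have h2' : (v j : ℝ) ≤ (u j : ℝ) + 1 := le_of_mul_le_mul_left h2 hδ
        have h1'' : u j ≤ v j + 1 := by exact_mod_cast h1'
        have h2'' : v j ≤ u j + 1 := by exact_mod_cast h2'
        rw [hwj]
        omega
      have step : Relation.ReflTransGen
          (fun u v : Fin m → ℤ => CellMeets δ K u ∧ CellMeets δ K v ∧ GridAdjZ u v) u w :=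
        Relation.ReflTransGen.single ⟨hmu, hmw, hadj⟩
      refine step.trans (ih w v (fun i hi => ?_) hwC hv)
      by_cases hij : i = j
      · subst hij; simp [hw]
      · rw [hw, Function.update_of_ne hij]
        exact h i (by simp [hij, hi])

lemma mem_gridCell_floor {m : ℕ} {δ : ℝ} (hδ : 0 < δ) (x : EuclideanSpace ℝ (Fin m)) :
    x ∈ GridCell δ (fun i => ⌊x i / δ⌋) := by
  intro i
  constructor
  · have h := Int.floor_le (x i / δ)
    have := mul_le_mul_of_nonneg_left h (le_of_lt hδ)
    rwa [mul_div_cancel₀ _ (ne_of_gt hδ)] at this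
  · have h := le_of_lt (Int.lt_floor_add_one (x i / δ))
    have := mul_le_mul_of_nonneg_left h (le_of_lt hδ)
    rwa [mul_div_cancel₀ _ (ne_of_gt hδ)] at this

/-- Let `m ≥ 1`, `δ > 0`, and let `K ⊆ ℝ^m` be a nonempty connected set.
Let `A := {a ∈ ℤ^m : (∏ᵢ [δaᵢ, δ(aᵢ+1)]) ∩ K ≠ ∅}`.  Then `A` is connected under grid
adjacency: any two of its elements are joined by a finite path of consecutively adjacent
elements of `A`. -/
theorem statement14 {m : ℕ} (hm : 1 ≤ m) (δ : ℝ) (hδ : 0 < δ)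
    (K : Set (EuclideanSpace ℝ (Fin m))) (hK : IsConnected K)
    (a b : Fin m → ℤ) (ha : CellMeets δ K a) (hb : CellMeets δ K b) :
    Relation.ReflTransGen
      (fun u v : Fin m → ℤ => CellMeets δ K u ∧ CellMeets δ K v ∧ GridAdjZ u v) a b := by
  classical
  set R := fun u v : Fin m → ℤ => CellMeets δ K u ∧ CellMeets δ K v ∧ GridAdjZ u v with hR
  obtain ⟨xa, hxaK, hxa⟩ := ha
  obtain ⟨xb, hxbK, hxb⟩ := hb
  set P := fun c : Fin m → ℤ => Relation.ReflTransGen R a c with hP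
  set U := ⋃ c : {c : Fin m → ℤ // P c}, GridCell δ c.1 with hU
  set V := ⋃ c : {c : Fin m → ℤ // CellMeets δ K c ∧ ¬ P c}, GridCell δ c.1 with hV
  have hUc : IsClosed U :=
    (((gridCell_locallyFinite (m := m) hδ)).comp_injective Subtype.val_injective).isClosed_iUnion
      fun c => isClosed_gridCell δ c.1
  have hVc : IsClosed V :=
    (((gridCell_locallyFinite (m := m) hδ)).comp_injective Subtype.val_injective).isClosed_iUnion
      fun c => isClosed_gridCell δ c.1
  -- membership characterizations
  have hmemU : ∀ x, x ∈ U ↔ ∃ c, P c ∧ x ∈ GridCell δ c := by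
    intro x
    constructor
    · intro hx
      obtain ⟨c, hc⟩ := Set.mem_iUnion.1 hx
      exact ⟨c.1, c.2, hc⟩
    · rintro ⟨c, hc, hxc⟩
      exact Set.mem_iUnion.2 ⟨⟨c, hc⟩, hxc⟩
  have hmemV : ∀ x, x ∈ V ↔ ∃ c, (CellMeets δ K c ∧ ¬ P c) ∧ x ∈ GridCell δ c := by
    intro x
    constructor
    · intro hx
      obtain ⟨c, hc⟩ := Set.mem_iUnion.1 hx
      exact ⟨c.1, c.2, hc⟩
    · rintro ⟨c, hc, hxc⟩
      exact Set.mem_iUnion.2 ⟨⟨c, hc⟩, hxc⟩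
  have hcover : K ⊆ U ∪ V := by
    intro x hx
    have hxc : x ∈ GridCell δ (fun i => ⌊x i / δ⌋) := mem_gridCell_floor hδ x
    by_cases hp : P (fun i => ⌊x i / δ⌋)
    · exact Or.inl ((hmemU x).2 ⟨_, hp, hxc⟩)
    · exact Or.inr ((hmemV x).2 ⟨_, ⟨⟨x, hx, hxc⟩, hp⟩, hxc⟩)
  have hdisj : ∀ x ∈ K, x ∈ U → x ∉ V := by
    intro x hx hxU hxV
    obtain ⟨c, hc, hxc⟩ := (hmemU x).1 hxU
    obtain ⟨c', ⟨_, hc'⟩, hxc'⟩ := (hmemV x).1 hxV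
    exact hc' (hc.trans (chain_of_common_point hδ hx Finset.univ c c'
      (fun i hi => absurd (Finset.mem_univ i) hi) hxc hxc'))
  have hxaU : xa ∈ U := (hmemU xa).2 ⟨a, Relation.ReflTransGen.refl, hxa⟩
  have hKU : K ⊆ U := by
    by_contra hns
    rw [Set.not_subset] at hns
    obtain ⟨z, hzK, hzU⟩ := hns
    have hpre := hK.isPreconnected
    have hcover' : K ⊆ Vᶜ ∪ Uᶜ := by
      intro x hx
      by_cases hxU : x ∈ U
      · exact Or.inl (hdisj x hx hxU)
      · exact Or.inr hxU
    have hne1 : (K ∩ Vᶜ).Nonempty := ⟨xa, hxaK, hdisj xa hxaK hxaU⟩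
    have hne2 : (K ∩ Uᶜ).Nonempty := ⟨z, hzK, hzU⟩
    obtain ⟨w, hwK, hwV, hwU⟩ := hpre Vᶜ Uᶜ hVc.isOpen_compl hUc.isOpen_compl hcover' hne1 hne2
    rcases hcover hwK with h | h
    · exact hwU h
    · exact hwV h
  have hxbU : xb ∈ U := hKU hxbK
  obtain ⟨c, hc, hxbc⟩ := (hmemU xb).1 hxbU
  exact hc.trans (chain_of_common_point hδ hxbK Finset.univ c b
    (fun i hi => absurd (Finset.mem_univ i) hi) hxbc hxb)
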